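/- Define X : ℝ² → ℝ³ by X(u,v) = ( cosh u·sin v , sinh u·cos v + (1/2)·sin v·cos v·(sinh²u + cosh²u) − v/2 , cosh u·cos v·(1 + sinh u·sin v) ). Then: (i) each coordinate function of X is harmonic on ℝ² (∂²X_k/∂u² + ∂²X_k/∂v² = 0); (ii) X is Lorentz-conformal, i.e. ⟨X_u,X_u⟩_L = ⟨X_v,X_v⟩_L and ⟨X_u,X_v⟩_L = 0 everywhere; and (iii) X(u,0) = (0, sinh u, cosh u) for all u ∈ ℝ. -/

import Mathlib

open Real

/-- Lorentzian inner product on ℝ³: ⟨p,q⟩ = p₁q₁ + p₂q₂ − p₃q₃. -/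
noncomputable def lorentz (p q : ℝ × ℝ × ℝ) : ℝ :=
  p.1 * q.1 + p.2.1 * q.2.1 - p.2.2 * q.2.2

/-- First coordinate of the bending helicoid with spacelike axis, case a = 1. -/
noncomputable def X1 (u v : ℝ) : ℝ :=
  cosh u * sin v

/-- Second coordinate of the bending helicoid with spacelike axis, case a = 1. -/
noncomputable def X2 (u v : ℝ) : ℝ :=
  sinh u * cos v + (1/2) * sin v * cos v * (sinh u ^ 2 + cosh u ^ 2) - v / 2

/-- Third coordinate of the bending helicoid with spacelike axis, case a = 1. -/
noncomputable def X3 (u v : ℝ) : ℝ :=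
  cosh u * cos v * (1 + sinh u * sin v)

/-- Partial derivative of X with respect to u. -/
noncomputable def Xu (u v : ℝ) : ℝ × ℝ × ℝ :=
  (deriv (fun s => X1 s v) u, deriv (fun s => X2 s v) u, deriv (fun s => X3 s v) u)

/-- Partial derivative of X with respect to v. -/
noncomputable def Xv (u v : ℝ) : ℝ × ℝ × ℝ :=
  (deriv (fun t => X1 u t) v, deriv (fun t => X2 u t) v, deriv (fun t => X3 u t) v)

lemma hX1u (v u : ℝ) : HasDerivAt (fun s => X1 s v) (sinh u * sin v) u := by
  unfold X1; exact (Real.hasDerivAt_cosh u).mul_const _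

lemma hX1v (u v : ℝ) : HasDerivAt (fun t => X1 u t) (cosh u * cos v) v := by
  unfold X1; simpa using (Real.hasDerivAt_sin v).const_mul (cosh u)

lemma hX2u (v u : ℝ) :
    HasDerivAt (fun s => X2 s v)
      (cosh u * cos v + 2 * sin v * cos v * sinh u * cosh u) u := by
  unfold X2
  have h := (((Real.hasDerivAt_sinh u).mul_const (cos v)).add
    ((((Real.hasDerivAt_sinh u).pow 2).add ((Real.hasDerivAt_cosh u).pow 2)).const_mul
      ((1/2) * sin v * cos v))).sub_const (v/2)
  refine h.congr_deriv ?_; push_cast; ring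

lemma hX2v (u v : ℝ) :
    HasDerivAt (fun t => X2 u t)
      (-(sinh u * sin v) + (1/2) * (cos v ^ 2 - sin v ^ 2) * (sinh u ^ 2 + cosh u ^ 2) - 1/2) v := by
  unfold X2
  have h := ((((Real.hasDerivAt_cos v).const_mul (sinh u)).add
    ((((Real.hasDerivAt_sin v).const_mul (1/2:ℝ)).mul (Real.hasDerivAt_cos v)).mul_const
      (sinh u ^ 2 + cosh u ^ 2))).sub ((hasDerivAt_id v).div_const 2))
  refine h.congr_deriv ?_; push_cast; ring

lemma hX3u (v u : ℝ) :
    HasDerivAt (fun s => X3 s v)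
      (sinh u * cos v + (sinh u ^ 2 + cosh u ^ 2) * sin v * cos v) u := by
  unfold X3
  have h := (((Real.hasDerivAt_cosh u).mul_const (cos v)).mul
    (((Real.hasDerivAt_sinh u).mul_const (sin v)).const_add 1))
  refine h.congr_deriv ?_; push_cast; ring

lemma hX3v (u v : ℝ) :
    HasDerivAt (fun t => X3 u t)
      (-(cosh u * sin v) + sinh u * cosh u * (cos v ^ 2 - sin v ^ 2)) v := by
  unfold X3
  have h := ((((Real.hasDerivAt_cos v).const_mul (cosh u))).mul
    (((Real.hasDerivAt_sin v).const_mul (sinh u)).const_add 1))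
  refine h.congr_deriv ?_; push_cast; ring

lemma dX1u (v : ℝ) : deriv (fun s => X1 s v) = fun u => sinh u * sin v :=
  funext fun u => (hX1u v u).deriv

lemma dX1v (u : ℝ) : deriv (fun t => X1 u t) = fun v => cosh u * cos v :=
  funext fun v => (hX1v u v).deriv

lemma dX2u (v : ℝ) : deriv (fun s => X2 s v) =
    fun u => cosh u * cos v + 2 * sin v * cos v * sinh u * cosh u :=
  funext fun u => (hX2u v u).deriv

lemma dX2v (u : ℝ) : deriv (fun t => X2 u t) =
    fun v => -(sinh u * sin v) + (1/2) * (cos v ^ 2 - sin v ^ 2) * (sinh u ^ 2 + cosh u ^ 2) - 1/2 :=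
  funext fun v => (hX2v u v).deriv

lemma dX3u (v : ℝ) : deriv (fun s => X3 s v) =
    fun u => sinh u * cos v + (sinh u ^ 2 + cosh u ^ 2) * sin v * cos v :=
  funext fun u => (hX3u v u).deriv

lemma dX3v (u : ℝ) : deriv (fun t => X3 u t) =
    fun v => -(cosh u * sin v) + sinh u * cosh u * (cos v ^ 2 - sin v ^ 2) :=
  funext fun v => (hX3v u v).deriv

/-- The bending helicoid with spacelike axis for a = 1 is harmonic, Lorentz-conformal,
and contains the circle (0, sinh u, cosh u). -/
theorem bending_helicoid_spacelike_a_eq_one :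
    (∀ u v : ℝ,
      deriv (deriv (fun s => X1 s v)) u + deriv (deriv (fun t => X1 u t)) v = 0 ∧
      deriv (deriv (fun s => X2 s v)) u + deriv (deriv (fun t => X2 u t)) v = 0 ∧
      deriv (deriv (fun s => X3 s v)) u + deriv (deriv (fun t => X3 u t)) v = 0) ∧
    (∀ u v : ℝ,
      lorentz (Xu u v) (Xu u v) = lorentz (Xv u v) (Xv u v) ∧
      lorentz (Xu u v) (Xv u v) = 0) ∧
    (∀ u : ℝ, (X1 u 0, X2 u 0, X3 u 0) = (0, sinh u, cosh u)) := by
  refine ⟨fun u v => ?_, fun u v => ?_, fun u => ?_⟩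
  · refine ⟨?_, ?_, ?_⟩
    · rw [dX1u, dX1v]
      have h1 : HasDerivAt (fun u : ℝ => sinh u * sin v) (cosh u * sin v) u :=
        (Real.hasDerivAt_sinh u).mul_const _
      have h2 : HasDerivAt (fun v : ℝ => cosh u * cos v) (cosh u * (-sin v)) v :=
        (Real.hasDerivAt_cos v).const_mul _
      rw [h1.deriv, h2.deriv]; ring
    · rw [dX2u, dX2v]
      have h1 : HasDerivAt
          (fun x : ℝ => cosh x * cos v + 2 * sin v * cos v * sinh x * cosh x)
          (sinh u * cos v + 2 * sin v * cos v * (cosh u ^ 2 + sinh u ^ 2)) u := by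
        have h := ((Real.hasDerivAt_cosh u).mul_const (cos v)).add
          ((((Real.hasDerivAt_sinh u).mul (Real.hasDerivAt_cosh u))).const_mul
            (2 * sin v * cos v))
        refine (h.congr_deriv ?_).congr_of_eventuallyEq (Filter.Eventually.of_forall fun x => by simp only [Pi.add_apply, Pi.mul_apply]; ring)
        all_goals try (funext x)
        all_goals push_cast
        all_goals ring
      have h2 : HasDerivAt
          (fun t : ℝ => -(sinh u * sin t) + (1/2) * (cos t ^ 2 - sin t ^ 2) *
            (sinh u ^ 2 + cosh u ^ 2) - 1/2)
          (-(sinh u * cos v) - 2 * sin v * cos v * (sinh u ^ 2 + cosh u ^ 2)) v := by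
        have h := ((((Real.hasDerivAt_sin v).const_mul (sinh u)).neg).add
          ((((Real.hasDerivAt_cos v).pow 2).sub ((Real.hasDerivAt_sin v).pow 2)).const_mul
            (1/2:ℝ) |>.mul_const (sinh u ^ 2 + cosh u ^ 2))).sub_const (1/2:ℝ)
        refine h.congr_deriv ?_
        all_goals try (funext x)
        all_goals push_cast
        all_goals ring
      rw [h1.deriv, h2.deriv]; ring
    · rw [dX3u, dX3v]
      have h1 : HasDerivAt
          (fun x : ℝ => sinh x * cos v + (sinh x ^ 2 + cosh x ^ 2) * sin v * cos v)
          (cosh u * cos v + 4 * sinh u * cosh u * sin v * cos v) u := by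
        have h' := ((Real.hasDerivAt_sinh u).mul_const (cos v)).add
          (((((Real.hasDerivAt_sinh u).pow 2).add ((Real.hasDerivAt_cosh u).pow 2)).mul_const
            (sin v)).mul_const (cos v))
        refine h'.congr_deriv ?_
        all_goals try (funext x)
        all_goals push_cast
        all_goals ring
      have h2 : HasDerivAt
          (fun t : ℝ => -(cosh u * sin t) + sinh u * cosh u * (cos t ^ 2 - sin t ^ 2))
          (-(cosh u * cos v) - 4 * sinh u * cosh u * sin v * cos v) v := by
        have h := (((Real.hasDerivAt_sin v).const_mul (cosh u)).neg).add
          ((((Real.hasDerivAt_cos v).pow 2).sub ((Real.hasDerivAt_sin v).pow 2)).const_mul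
            (sinh u * cosh u))
        refine h.congr_deriv ?_
        all_goals try (funext x)
        all_goals push_cast
        all_goals ring
      rw [h1.deriv, h2.deriv]; ring
  · have hC : cosh u ^ 2 = sinh u ^ 2 + 1 := by
      have := Real.cosh_sq u; linarith
    have hs : sin v ^ 2 + cos v ^ 2 = 1 := sin_sq_add_cos_sq v
    have hXu : Xu u v = (sinh u * sin v,
        cosh u * cos v + 2 * sin v * cos v * sinh u * cosh u,
        sinh u * cos v + (sinh u ^ 2 + cosh u ^ 2) * sin v * cos v) := by
      unfold Xu
      rw [(hX1u v u).deriv, (hX2u v u).deriv, (hX3u v u).deriv]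
    have hXv : Xv u v = (cosh u * cos v,
        -(sinh u * sin v) + (1/2) * (cos v ^ 2 - sin v ^ 2) * (sinh u ^ 2 + cosh u ^ 2) - 1/2,
        -(cosh u * sin v) + sinh u * cosh u * (cos v ^ 2 - sin v ^ 2)) := by
      unfold Xv
      rw [(hX1v u v).deriv, (hX2v u v).deriv, (hX3v u v).deriv]
    rw [hXu, hXv]
    unfold lorentz
    constructor
    · simp only
      set S := sinh u; set C := cosh u; set s := sin v; set c := cos v
      linear_combination (1/2*c^2 - 1/4*c^4 + 1/2*s^2 - 1/2*s^2*c^2 - 1/4*s^4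
        - 1/4*C^2*c^4 - 1/2*C^2*s^2*c^2 - 1/4*C^2*s^4 + S*s*c^2 + S*s^3
        + 1/4*S^2*c^4 + 1/2*S^2*s^2*c^2 + 1/4*S^2*s^4) * hC
        + (1/4 - 1/4*c^2 - 1/4*s^2 + S*s) * hs
    · simp only
      set S := sinh u; set C := cosh u; set s := sin v; set c := cos v
      linear_combination (1/2*C*c^3 + 1/2*C*s^2*c) * hC + (1/2*C*c) * hs
  · simp [X1, X2, X3]
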